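/- Let (A, C, B) be a recollement of abelian categories and let 0 → M₁ → M₂ → M₃ → 0 be a short exact sequence in C. If the counit map ε_{M_i} : j_! j^*(M_i) → M_i is a monomorphism for i = 1, 2, 3, then the induced sequence 0 → i^*(M₁) → i^*(M₂) → i^*(M₃) → 0 is exact in A. -/

import Mathlib

open CategoryTheory CategoryTheory.Limits
open ZeroObject

universe v₁ v₂ v₃ u₁ u₂ u₃

/-- A recollement of abelian categories `(𝒜, 𝒞, ℬ)`, consisting of additive functors
`i_* : 𝒜 ⥤ 𝒞`, `i^*, i^! : 𝒞 ⥤ 𝒜`, `j^* : 𝒞 ⥤ ℬ`, `j_!, j_* : ℬ ⥤ 𝒞` with adjoint pairs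
`(i^*, i_*)`, `(i_*, i^!)`, `(j_!, j^*)`, `(j^*, j_*)`, with `i_*`, `j_!`, `j_*` fully faithful
and the essential image of `i_*` equal to the kernel of `j^*`. -/
structure Recollement (𝒜 : Type u₁) (𝒞 : Type u₂) (ℬ : Type u₃)
    [Category.{v₁} 𝒜] [Category.{v₂} 𝒞] [Category.{v₃} ℬ]
    [Abelian 𝒜] [Abelian 𝒞] [Abelian ℬ] where
  /-- the functor `i^* : 𝒞 ⥤ 𝒜` -/
  iStar : 𝒞 ⥤ 𝒜
  /-- the functor `i_* : 𝒜 ⥤ 𝒞` -/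
  iIns : 𝒜 ⥤ 𝒞
  /-- the functor `i^! : 𝒞 ⥤ 𝒜` -/
  iShriek : 𝒞 ⥤ 𝒜
  /-- the functor `j_! : ℬ ⥤ 𝒞` -/
  jShriek : ℬ ⥤ 𝒞
  /-- the functor `j^* : 𝒞 ⥤ ℬ` -/
  jStar : 𝒞 ⥤ ℬ
  /-- the functor `j_* : ℬ ⥤ 𝒞` -/
  jIns : ℬ ⥤ 𝒞
  iStar_additive : iStar.Additive
  iIns_additive : iIns.Additive
  iShriek_additive : iShriek.Additive
  jShriek_additive : jShriek.Additive
  jStar_additive : jStar.Additive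
  jIns_additive : jIns.Additive
  /-- the adjunction `i^* ⊣ i_*` -/
  adj₁ : iStar ⊣ iIns
  /-- the adjunction `i_* ⊣ i^!` -/
  adj₂ : iIns ⊣ iShriek
  /-- the adjunction `j_! ⊣ j^*` -/
  adj₃ : jShriek ⊣ jStar
  /-- the adjunction `j^* ⊣ j_*` -/
  adj₄ : jStar ⊣ jIns
  iIns_full : iIns.Full
  iIns_faithful : iIns.Faithful
  jShriek_full : jShriek.Full
  jShriek_faithful : jShriek.Faithful
  jIns_full : jIns.Full
  jIns_faithful : jIns.Faithful
  /-- `im i_* = ker j^*` -/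
  im_eq_ker : ∀ X : 𝒞, IsZero (jStar.obj X) ↔ ∃ A₀ : 𝒜, Nonempty (iIns.obj A₀ ≅ X)

variable {𝒜 : Type u₁} {𝒞 : Type u₂} {ℬ : Type u₃}
  [Category.{v₁} 𝒜] [Category.{v₂} 𝒞] [Category.{v₃} ℬ]
  [Abelian 𝒜] [Abelian 𝒞] [Abelian ℬ]

/-- `0 ⟶ X ⟶ Y ⟶ Z ⟶ 0` is a short exact sequence. -/
def IsSES {𝒟 : Type*} [Category 𝒟] [Abelian 𝒟] {X Y Z : 𝒟}
    (f : X ⟶ Y) (g : Y ⟶ Z) : Prop :=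
  ∃ w : f ≫ g = 0, (ShortComplex.mk f g w).ShortExact

section Aux

open ZeroObject

variable (R : Recollement 𝒜 𝒞 ℬ)

lemma Recollement.jStar_iIns_isZero (A : 𝒜) : IsZero (R.jStar.obj (R.iIns.obj A)) :=
  (R.im_eq_ker _).2 ⟨A, ⟨Iso.refl _⟩⟩

lemma Recollement.hom_jShriek_iIns_eq_zero {B : ℬ} {A : 𝒜}
    (φ : R.jShriek.obj B ⟶ R.iIns.obj A) : φ = 0 := by
  haveI := R.jShriek_additive
  have h : R.adj₃.homEquiv B (R.iIns.obj A) φ = 0 :=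
    (R.jStar_iIns_isZero A).eq_of_tgt _ _
  have h2 := congrArg (R.adj₃.homEquiv B (R.iIns.obj A)).symm h
  rw [Equiv.symm_apply_apply] at h2
  rw [h2, Adjunction.homEquiv_counit, Functor.map_zero, zero_comp]

lemma Recollement.counit_unit_zero (M : 𝒞) :
    R.adj₃.counit.app M ≫ R.adj₁.unit.app M = 0 :=
  R.hom_jShriek_iIns_eq_zero _

/-- For every `M`, the unit `M ⟶ i_* i^* M` is a cokernel of the counit
`j_! j^* M ⟶ M`. -/
noncomputable def Recollement.unitIsCokernel (M : 𝒞) :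
    IsColimit (CokernelCofork.ofπ (R.adj₁.unit.app M) (R.counit_unit_zero M)) := by
  haveI := R.jStar_additive
  haveI := R.jShriek_additive
  haveI := R.iIns_additive
  haveI := R.iIns_full
  haveI := R.iIns_faithful
  haveI : R.jStar.IsLeftAdjoint := ⟨_, ⟨R.adj₄⟩⟩
  set ε := R.adj₃.counit.app M with hε
  set η := R.adj₁.unit.app M with hη
  -- `j^* ε` is (split) epi
  have htri : R.adj₃.unit.app (R.jStar.obj M) ≫ R.jStar.map ε = 𝟙 _ :=
    R.adj₃.right_triangle_components M
  haveI : Epi (R.adj₃.unit.app (R.jStar.obj M) ≫ R.jStar.map ε) := by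
    rw [htri]; infer_instance
  haveI : Epi (R.jStar.map ε) := epi_of_epi (R.adj₃.unit.app (R.jStar.obj M)) (R.jStar.map ε)
  -- `j^* (cokernel ε)` is zero
  have hπ0 : R.jStar.map (cokernel.π ε) = 0 := by
    rw [← cancel_epi (R.jStar.map ε), ← Functor.map_comp, cokernel.condition,
      Functor.map_zero, comp_zero]
  haveI : Epi (R.jStar.map (cokernel.π ε)) := R.jStar.map_epi _
  have hz : IsZero (R.jStar.obj (cokernel ε)) := by
    rw [IsZero.iff_id_eq_zero]
    rw [← cancel_epi (R.jStar.map (cokernel.π ε)), hπ0]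
    simp
  have hex := (R.im_eq_ker (cokernel ε)).1 hz
  set A₀ : 𝒜 := hex.choose with hA₀
  have u : R.iIns.obj A₀ ≅ cokernel ε := Classical.choice hex.choose_spec
  set t : cokernel ε ⟶ R.iIns.obj (R.iStar.obj M) :=
    cokernel.desc ε η (R.counit_unit_zero M) with ht
  have hπt : cokernel.π ε ≫ t = η := cokernel.π_desc _ _ _
  set ψ : R.iStar.obj M ⟶ A₀ := (R.adj₁.homEquiv M A₀).symm (cokernel.π ε ≫ u.inv) with hψdef
  have hψ : η ≫ R.iIns.map ψ = cokernel.π ε ≫ u.inv := by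
    have h2 := (R.adj₁.homEquiv M A₀).apply_symm_apply (cokernel.π ε ≫ u.inv)
    rw [Adjunction.homEquiv_unit] at h2
    exact h2
  set τ : A₀ ⟶ R.iStar.obj M := R.iIns.preimage (u.hom ≫ t) with hτdef
  have hτ : R.iIns.map τ = u.hom ≫ t := R.iIns.map_preimage _
  have hψτ : ψ ≫ τ = 𝟙 (R.iStar.obj M) := by
    apply (R.adj₁.homEquiv M (R.iStar.obj M)).injective
    rw [Adjunction.homEquiv_unit, Adjunction.homEquiv_unit, Functor.map_comp,
      ← Category.assoc, hψ, Category.assoc, hτ]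
    simp [hπt]
    exact hη
  haveI : IsIso t := by
    refine ⟨R.iIns.map ψ ≫ u.hom, ?_, ?_⟩
    · rw [← cancel_epi (cokernel.π ε), ← Category.assoc, ← Category.assoc, hπt, hψ]
      simp
    · rw [Category.assoc, ← hτ, ← Functor.map_comp, hψτ, CategoryTheory.Functor.map_id]
  exact IsColimit.ofIsoColimit (cokernelIsCokernel ε) (Cofork.ext (asIso t) hπt)

end Aux

/-- If `0 → M₁ → M₂ → M₃ → 0` is a short exact sequence in `𝒞` and the counit map
`ε_{Mᵢ} : j_! j^*(Mᵢ) → Mᵢ` is a monomorphism for `i = 1, 2, 3`, then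
`0 → i^*(M₁) → i^*(M₂) → i^*(M₃) → 0` is exact in `𝒜`. -/
theorem stmt_3 (R : Recollement 𝒜 𝒞 ℬ) {M₁ M₂ M₃ : 𝒞} (f : M₁ ⟶ M₂) (g : M₂ ⟶ M₃)
    (hfg : IsSES f g)
    (h₁ : Mono (R.adj₃.counit.app M₁)) (h₂ : Mono (R.adj₃.counit.app M₂))
    (h₃ : Mono (R.adj₃.counit.app M₃)) :
    IsSES (R.iStar.map f) (R.iStar.map g) := by
  classical
  haveI := R.iStar_additive
  haveI := R.iIns_additive
  haveI := R.jStar_additive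
  haveI := R.jShriek_additive
  haveI := R.iIns_full
  haveI := R.iIns_faithful
  haveI : R.jStar.IsLeftAdjoint := ⟨_, ⟨R.adj₄⟩⟩
  haveI : R.jShriek.IsLeftAdjoint := ⟨_, ⟨R.adj₃⟩⟩
  haveI : PreservesColimitsOfSize.{0, 0} R.jShriek := R.adj₃.leftAdjoint_preservesColimits
  haveI : PreservesColimitsOfSize.{0, 0} R.jStar := R.adj₄.leftAdjoint_preservesColimits
  haveI : PreservesLimitsOfSize.{0, 0} R.jStar := R.adj₃.rightAdjoint_preservesLimits
  haveI : PreservesLimitsOfSize.{0, 0} R.iIns := R.adj₁.rightAdjoint_preservesLimits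
  haveI : PreservesColimitsOfSize.{0, 0} R.iIns := R.adj₂.leftAdjoint_preservesColimits
  obtain ⟨wfg, hSE⟩ := hfg
  haveI : Mono f := hSE.mono_f
  haveI : Epi g := hSE.epi_g
  have w₃ : R.iStar.map f ≫ R.iStar.map g = 0 := by
    rw [← Functor.map_comp, wfg, Functor.map_zero]
  set S₂ : ShortComplex 𝒞 := ShortComplex.mk f g wfg with hS₂
  set S₀ : ShortComplex 𝒜 := ShortComplex.mk (R.iStar.map f) (R.iStar.map g) w₃ with hS₀
  haveI : Epi (S₂.map R.jStar).g := R.jStar.map_epi g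
  set L₁ : ShortComplex 𝒞 := (S₂.map R.jStar).map R.jShriek with hL₁
  set L₃ : ShortComplex 𝒞 := S₀.map R.iIns with hL₃
  set L₀ : ShortComplex 𝒞 :=
    ShortComplex.mk (0 : (0 : 𝒞) ⟶ (0 : 𝒞)) (0 : (0 : 𝒞) ⟶ (0 : 𝒞)) (by simp) with hL₀
  set v₁₂ : L₁ ⟶ S₂ :=
    { τ₁ := R.adj₃.counit.app M₁
      τ₂ := R.adj₃.counit.app M₂
      τ₃ := R.adj₃.counit.app M₃
      comm₁₂ := (R.adj₃.counit.naturality f).symm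
      comm₂₃ := (R.adj₃.counit.naturality g).symm } with hv₁₂
  set v₂₃ : S₂ ⟶ L₃ :=
    { τ₁ := R.adj₁.unit.app M₁
      τ₂ := R.adj₁.unit.app M₂
      τ₃ := R.adj₁.unit.app M₃
      comm₁₂ := (R.adj₁.unit.naturality f).symm
      comm₂₃ := (R.adj₁.unit.naturality g).symm } with hv₂₃
  have w₁₃ : v₁₂ ≫ v₂₃ = 0 := by
    ext
    · exact R.counit_unit_zero M₁
    · exact R.counit_unit_zero M₂
    · exact R.counit_unit_zero M₃
  set D : ShortComplex.SnakeInput 𝒞 :=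
    { L₀ := L₀
      L₁ := L₁
      L₂ := S₂
      L₃ := L₃
      v₀₁ := 0
      v₁₂ := v₁₂
      v₂₃ := v₂₃
      w₀₂ := zero_comp
      w₁₃ := w₁₃
      h₀ := by
        apply ShortComplex.isLimitOfIsLimitπ
        · exact (KernelFork.isLimitMapConeEquiv _ _).symm
            (zeroKernelOfCancelZero (R.adj₃.counit.app M₁)
              (fun Z q hq => zero_of_comp_mono _ hq))
        · exact (KernelFork.isLimitMapConeEquiv _ _).symm
            (zeroKernelOfCancelZero (R.adj₃.counit.app M₂)
              (fun Z q hq => zero_of_comp_mono _ hq))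
        · exact (KernelFork.isLimitMapConeEquiv _ _).symm
            (zeroKernelOfCancelZero (R.adj₃.counit.app M₃)
              (fun Z q hq => zero_of_comp_mono _ hq))
      h₃ := by
        apply ShortComplex.isColimitOfIsColimitπ
        · exact (CokernelCofork.isColimitMapCoconeEquiv _ _).symm (R.unitIsCokernel M₁)
        · exact (CokernelCofork.isColimitMapCoconeEquiv _ _).symm (R.unitIsCokernel M₂)
        · exact (CokernelCofork.isColimitMapCoconeEquiv _ _).symm (R.unitIsCokernel M₃)
      L₁_exact := by
        have hB : (S₂.map R.jStar).Exact := hSE.exact.map R.jStar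
        haveI : Epi (S₂.map R.jStar).g := R.jStar.map_epi g
        exact hB.map_of_epi_of_preservesCokernel R.jShriek inferInstance inferInstance
      epi_L₁_g := R.jShriek.map_epi _
      L₂_exact := hSE.exact
      mono_L₂_f := hSE.mono_f } with hD
  have hδ : D.δ = 0 := (isZero_zero 𝒞).eq_of_src _ _
  have hmono3 : Mono D.L₃.f := by
    have hex := D.L₂'_exact
    exact hex.mono_g hδ
  have hmono : Mono (R.iStar.map f) := by
    exact R.iIns.mono_of_mono_map (hmono3 : Mono (R.iIns.map (R.iStar.map f)))
  have hepi3 : Epi D.L₃.g := D.epi_L₃_g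
  have hepi : Epi (R.iStar.map g) := by
    exact R.iIns.epi_of_epi_map (hepi3 : Epi (R.iIns.map (R.iStar.map g)))
  have hexact : S₀.Exact := (S₀.exact_map_iff_of_faithful R.iIns).1 D.L₃_exact
  exact ⟨w₃, { exact := hexact, mono_f := hmono, epi_g := hepi }⟩
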